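/- If dF has finite mean and g ∈ L¹(dF) is absolutely continuous on [0,∞) with increasing derivative g' (a.e.), then lim_{a→∞} g'(a) · ∫_a^∞ (F(∞) − F(y)) dy = 0; equivalently lim_{a→∞} C(a)·g'(a) = 0. -/

import Mathlib

open MeasureTheory Set Filter
open Topology

lemma tail_integral_tendsto_zero (ν : Measure ℝ) (f : ℝ → ℝ)
    (hf : IntegrableOn f (Ioi (0:ℝ)) ν) :
    Tendsto (fun a => ∫ x in Ioi a, f x ∂ν) atTop (𝓝 0) := by
  have hU : (⋃ b : ℝ, Ioc (0:ℝ) b) = Ioi 0 := iUnion_Ioc_right 0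
  have h1 : Tendsto (fun a : ℝ => ∫ x in Ioc (0:ℝ) a, f x ∂ν) atTop
      (𝓝 (∫ x in Ioi (0:ℝ), f x ∂ν)) := by
    have := tendsto_setIntegral_of_monotone (μ := ν) (f := f)
      (s := fun a : ℝ => Ioc (0:ℝ) a) (fun _ => measurableSet_Ioc)
      (fun a b hab => Ioc_subset_Ioc le_rfl hab) (by rwa [hU])
    rwa [hU] at this
  have h2 : Tendsto (fun a : ℝ =>
      ∫ x in Ioi (0:ℝ), f x ∂ν - ∫ x in Ioc (0:ℝ) a, f x ∂ν) atTop (𝓝 0) := by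
    have := (tendsto_const_nhds (x := ∫ x in Ioi (0:ℝ), f x ∂ν) (f := atTop)).sub h1
    simpa using this
  refine h2.congr' ?_
  filter_upwards [eventually_ge_atTop (0:ℝ)] with a ha
  have hsplit : Ioc (0:ℝ) a ∪ Ioi a = Ioi 0 := Ioc_union_Ioi_eq_Ioi ha
  have hd : Disjoint (Ioc (0:ℝ) a) (Ioi a) := by
    rw [Set.disjoint_left]
    rintro x ⟨_, hx2⟩ hx3
    exact absurd hx3 (not_lt.2 hx2)
  have heq : ∫ x in Ioi (0:ℝ), f x ∂ν
      = ∫ x in Ioc (0:ℝ) a, f x ∂ν + ∫ x in Ioi a, f x ∂ν := by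
    rw [← hsplit, setIntegral_union hd measurableSet_Ioi
      (hf.mono_set (by rw [← hsplit]; exact subset_union_left))
      (hf.mono_set (by rw [← hsplit]; exact subset_union_right))]
  rw [heq]; ring

/-- If `dF` has finite mean and `g ∈ L¹(dF)` is absolutely continuous with
increasing derivative `g'`, then `g'(a) · ∫_a^∞ (F(∞) − F(y)) dy → 0` as
`a → ∞`, i.e. `C(a)·g'(a) → 0`. -/
theorem deriv_times_call_tail (μ : Measure ℝ) [IsLocallyFiniteMeasure μ]
    (hmean : Integrable (fun x => x) (μ.restrict (Set.Ici (0:ℝ))))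
    (g g' : ℝ → ℝ)
    (hmono : MonotoneOn g' (Set.Ici (0:ℝ)))
    (hac : ∀ x : ℝ, 0 ≤ x → g x = g 0 + ∫ t in (0:ℝ)..x, g' t)
    (hg : Integrable g (μ.restrict (Set.Ici (0:ℝ)))) :
    Tendsto
      (fun a => g' a *
        ∫ y in Set.Ioi a, ((μ (Set.Ici (0:ℝ))).toReal - (μ (Set.Icc 0 y)).toReal))
      atTop (nhds 0) := by
  set h : ℝ → ℝ := fun y => (μ (Ioi y)).toReal with hh
  have hmean' : IntegrableOn (fun x : ℝ => x) (Ici 0) μ := hmean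
  have hg' : IntegrableOn g (Ici (0:ℝ)) μ := hg
  have hmeasE : Measurable (fun y : ℝ => μ (Ioi y)) :=
    Antitone.measurable (fun s t hst => measure_mono (Ioi_subset_Ioi hst))
  -- finiteness of μ (Ici 0)
  have hlintfin : ∫⁻ x in Ici (0:ℝ), ENNReal.ofReal x ∂μ < ⊤ := hmean.lintegral_lt_top
  have hfin0 : μ (Ici (0:ℝ)) ≠ ⊤ := by
    have h1 : μ (Icc (0:ℝ) 1) ≠ ⊤ := (isCompact_Icc.measure_lt_top).ne
    have h2 : μ (Ioi (1:ℝ)) ≤ ∫⁻ x in Ici (0:ℝ), ENNReal.ofReal x ∂μ := by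
      calc μ (Ioi (1:ℝ)) = ∫⁻ _ in Ioi (1:ℝ), 1 ∂μ := (setLIntegral_one _).symm
        _ ≤ ∫⁻ x in Ioi (1:ℝ), ENNReal.ofReal x ∂μ := by
            refine setLIntegral_mono' measurableSet_Ioi fun x hx => ?_
            simpa using ENNReal.one_le_ofReal.2 (le_of_lt hx)
        _ ≤ ∫⁻ x in Ici (0:ℝ), ENNReal.ofReal x ∂μ :=
            lintegral_mono_set (fun x hx => mem_Ici.2 (le_trans zero_le_one (le_of_lt (mem_Ioi.1 hx))))
    have h3 : μ (Ici (0:ℝ)) ≤ μ (Icc (0:ℝ) 1) + μ (Ioi (1:ℝ)) := by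
      rw [← Icc_union_Ioi_eq_Ici (zero_le_one (α := ℝ))]
      exact measure_union_le _ _
    exact ne_top_of_le_ne_top (ENNReal.add_ne_top.2
      ⟨h1, ne_top_of_le_ne_top hlintfin.ne h2⟩) h3
  have hfinIoi : ∀ y : ℝ, 0 ≤ y → μ (Ioi y) ≠ ⊤ := fun y hy =>
    ne_top_of_le_ne_top hfin0 (measure_mono fun x hx => le_trans hy (le_of_lt hx))
  -- layer cake identity
  have LC : ∀ a : ℝ, 0 ≤ a →
      ∫⁻ x in Ioi a, ENNReal.ofReal (x - a) ∂μ = ∫⁻ y in Ioi a, μ (Ioi y) := by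
    intro a _
    have f_nn : 0 ≤ᵐ[μ.restrict (Ioi a)] fun x => x - a := by
      filter_upwards [ae_restrict_mem measurableSet_Ioi] with x hx
      simp only [mem_Ioi] at hx
      simp only [Pi.zero_apply]
      linarith
    have key := lintegral_eq_lintegral_meas_lt (μ.restrict (Ioi a)) f_nn
      ((measurable_id.sub measurable_const).aemeasurable)
    rw [key]
    have step1 : ∫⁻ t in Ioi (0:ℝ), (μ.restrict (Ioi a)) {x | t < x - a}
        = ∫⁻ t in Ioi (0:ℝ), μ (Ioi (t + a)) := by
      refine setLIntegral_congr_fun measurableSet_Ioi (fun t ht => ?_)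
      have hset : {x : ℝ | t < x - a} = Ioi (t + a) := by
        ext x; simp [lt_sub_iff_add_lt]
      rw [hset, Measure.restrict_apply' measurableSet_Ioi, inter_eq_self_of_subset_left]
      intro x hx
      simp only [mem_Ioi] at hx ⊢
      have ht0 : (0:ℝ) < t := ht
      linarith
    rw [step1]
    have step2 : ∫⁻ t in Ioi (0:ℝ), μ (Ioi (t + a))
        = ∫⁻ y in Ioi a, μ (Ioi y) := by
      rw [← lintegral_indicator measurableSet_Ioi, ← lintegral_indicator measurableSet_Ioi]
      have key2 := lintegral_add_right_eq_self (μ := (volume : Measure ℝ))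
        ((Ioi a).indicator fun y => μ (Ioi y)) a
      rw [← key2]
      apply lintegral_congr
      intro t
      by_cases ht : 0 < t
      · rw [indicator_of_mem (mem_Ioi.2 ht), indicator_of_mem]
        simpa using ht
      · rw [indicator_of_notMem (by simpa using ht), indicator_of_notMem]
        simpa using ht
    exact step2
  -- finiteness of the C-integrand
  have hLfin : ∫⁻ y in Ioi (0:ℝ), μ (Ioi y) < ⊤ := by
    rw [← LC 0 le_rfl]
    calc ∫⁻ x in Ioi (0:ℝ), ENNReal.ofReal (x - 0) ∂μ
        ≤ ∫⁻ x in Ici (0:ℝ), ENNReal.ofReal x ∂μ := by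
          simp only [sub_zero]
          exact lintegral_mono_set Ioi_subset_Ici_self
      _ < ⊤ := hlintfin
  -- integrability of h wrt Lebesgue on Ioi 0
  have hInt : IntegrableOn h (Ioi (0:ℝ)) volume := by
    constructor
    · exact (hmeasE.ennreal_toReal).aestronglyMeasurable
    · rw [hasFiniteIntegral_iff_ofReal (ae_of_all _ fun y => ENNReal.toReal_nonneg)]
      calc ∫⁻ y in Ioi (0:ℝ), ENNReal.ofReal (h y)
          ≤ ∫⁻ y in Ioi (0:ℝ), μ (Ioi y) := lintegral_mono fun y => ENNReal.ofReal_toReal_le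
        _ < ⊤ := hLfin
  -- integrabilities wrt μ on Ioi 0
  have hg1 : IntegrableOn g (Ioi (0:ℝ)) μ := hg'.mono_set Ioi_subset_Ici_self
  have hgabs : IntegrableOn (fun x => |g x|) (Ioi (0:ℝ)) μ := hg1.abs
  have hid : IntegrableOn (fun x : ℝ => x) (Ioi (0:ℝ)) μ := hmean'.mono_set Ioi_subset_Ici_self
  have h1int : IntegrableOn (fun _ : ℝ => (1:ℝ)) (Ioi (0:ℝ)) μ := by
    refine integrableOn_const ?_
    exact (lt_of_le_of_lt (measure_mono Ioi_subset_Ici_self) (lt_top_iff_ne_top.2 hfin0)).ne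
  -- the four tails
  have T1 := tail_integral_tendsto_zero μ (fun x => |g x|) hgabs
  have T2 := tail_integral_tendsto_zero μ (fun _ => (1:ℝ)) h1int
  have T3 := tail_integral_tendsto_zero μ (fun x => x) hid
  have T4 := tail_integral_tendsto_zero volume h hInt
  set B : ℝ → ℝ := fun a => (∫ x in Ioi a, |g x| ∂μ) + |g 0| * ∫ x in Ioi a, (1:ℝ) ∂μ
    + |g' 0| * ∫ x in Ioi a, x ∂μ + |g' 0| * ∫ y in Ioi a, h y with hB
  have hBtend : Tendsto B atTop (𝓝 0) := by
    have := ((T1.add (T2.const_mul (|g 0|))).add (T3.const_mul (|g' 0|))).add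
      (T4.const_mul (|g' 0|))
    simpa [hB] using this
  -- rewrite target integrand
  have hCeq : ∀ a : ℝ, 0 ≤ a →
      (∫ y in Ioi a, ((μ (Ici (0:ℝ))).toReal - (μ (Icc 0 y)).toReal)) = ∫ y in Ioi a, h y := by
    intro a ha
    refine setIntegral_congr_fun measurableSet_Ioi fun y hy => ?_
    have hy0 : (0:ℝ) ≤ y := le_trans ha (le_of_lt hy)
    have hdisj : Disjoint (Icc (0:ℝ) y) (Ioi y) := by
      rw [Set.disjoint_left]
      rintro x ⟨_, hx2⟩ hx3
      exact absurd hx3 (not_lt.2 hx2)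
    have hsplit : μ (Ici (0:ℝ)) = μ (Icc 0 y) + μ (Ioi y) := by
      rw [← Icc_union_Ioi_eq_Ici hy0, measure_union hdisj measurableSet_Ioi]
    have hIccfin : μ (Icc (0:ℝ) y) ≠ ⊤ :=
      ne_top_of_le_ne_top hfin0 (measure_mono Icc_subset_Ici_self)
    rw [hsplit, ENNReal.toReal_add hIccfin (hfinIoi y hy0)]
    simp [hh]
  have hCnn : ∀ a : ℝ, 0 ≤ ∫ y in Ioi a, h y := fun a =>
    setIntegral_nonneg measurableSet_Ioi fun y _ => ENNReal.toReal_nonneg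
  -- real-valued identity C a = ∫ (x - a) dμ
  have hCid : ∀ a : ℝ, 0 ≤ a → ∫ y in Ioi a, h y = ∫ x in Ioi a, (x - a) ∂μ := by
    intro a ha
    have f_nn : 0 ≤ᵐ[μ.restrict (Ioi a)] fun x => x - a := by
      filter_upwards [ae_restrict_mem measurableSet_Ioi] with x hx
      simp only [mem_Ioi] at hx
      simp only [Pi.zero_apply]
      linarith
    have lhs : ∫ y in Ioi a, h y = (∫⁻ y in Ioi a, μ (Ioi y)).toReal := by
      rw [integral_eq_lintegral_of_nonneg_ae (ae_of_all _ fun y => ENNReal.toReal_nonneg)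
        (hmeasE.ennreal_toReal.aestronglyMeasurable)]
      congr 1
      refine setLIntegral_congr_fun measurableSet_Ioi (fun y hy => ?_)
      exact ENNReal.ofReal_toReal (hfinIoi y (le_trans ha (le_of_lt hy)))
    have rhs : ∫ x in Ioi a, (x - a) ∂μ
        = (∫⁻ x in Ioi a, ENNReal.ofReal (x - a) ∂μ).toReal := by
      rw [integral_eq_lintegral_of_nonneg_ae f_nn
        ((measurable_id.sub measurable_const).aestronglyMeasurable)]
    rw [lhs, rhs, LC a ha]
  -- interval-integrability of g'
  have hII : ∀ x : ℝ, 0 ≤ x → IntervalIntegrable g' volume 0 x := by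
    intro x hx
    apply MonotoneOn.intervalIntegrable
    apply hmono.mono
    rw [uIcc_of_le hx]
    exact fun t ht => ht.1
  -- convexity inequality
  have hkey : ∀ a : ℝ, 0 ≤ a → ∀ x : ℝ, a < x → g' a * (x - a) ≤ g x - g a := by
    intro a ha x hx
    have hax : a ≤ x := le_of_lt hx
    have h0x : (0:ℝ) ≤ x := le_trans ha hax
    have hint_ax : IntervalIntegrable g' volume a x := by
      apply MonotoneOn.intervalIntegrable
      apply hmono.mono
      rw [uIcc_of_le hax]
      exact fun t ht => le_trans ha ht.1
    have hgx : g x - g a = ∫ t in a..x, g' t := by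
      rw [hac x h0x, hac a ha,
        ← intervalIntegral.integral_interval_sub_left (hII x h0x) (hII a ha)]
      ring
    have hmonoc : ∫ _ in a..x, g' a ≤ ∫ t in a..x, g' t :=
      intervalIntegral.integral_mono_on hax intervalIntegrable_const hint_ax
        (fun t ht => hmono (mem_Ici.2 ha) (mem_Ici.2 (le_trans ha ht.1)) ht.1)
    calc g' a * (x - a) = ∫ _ in a..x, g' a := by
          rw [intervalIntegral.integral_const, smul_eq_mul]; ring
      _ ≤ ∫ t in a..x, g' t := hmonoc
      _ = g x - g a := hgx.symm
  -- lower bound on g a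
  have hga_lb : ∀ a : ℝ, 0 ≤ a → g 0 + g' 0 * a ≤ g a := by
    intro a ha
    rw [hac a ha]
    have hle : ∫ _ in (0:ℝ)..a, g' 0 ≤ ∫ t in (0:ℝ)..a, g' t :=
      intervalIntegral.integral_mono_on ha intervalIntegrable_const (hII a ha)
        (fun t ht => hmono (mem_Ici.2 le_rfl) (mem_Ici.2 ht.1) ht.1)
    rw [intervalIntegral.integral_const] at hle
    simp only [smul_eq_mul, sub_zero] at hle
    linarith [hle]
  -- eventual bounds and squeeze
  have hmain : ∀ a : ℝ, 0 ≤ a →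
      -B a ≤ g' a * (∫ y in Ioi a, h y) ∧ g' a * (∫ y in Ioi a, h y) ≤ B a := by
    intro a ha
    have hIoi_sub : Ioi a ⊆ Ioi (0:ℝ) := Ioi_subset_Ioi ha
    have hgabs_a : IntegrableOn (fun x => |g x|) (Ioi a) μ := hgabs.mono_set hIoi_sub
    have hg_a : IntegrableOn g (Ioi a) μ := hg1.mono_set hIoi_sub
    have hid_a : IntegrableOn (fun x : ℝ => x) (Ioi a) μ := hid.mono_set hIoi_sub
    have h1_a : IntegrableOn (fun _ : ℝ => (1:ℝ)) (Ioi a) μ := h1int.mono_set hIoi_sub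
    have hfina : μ (Ioi a) < ⊤ := lt_of_le_of_lt
      (measure_mono (Subset.trans hIoi_sub Ioi_subset_Ici_self)) (lt_top_iff_ne_top.2 hfin0)
    have hconst_a : ∀ c : ℝ, IntegrableOn (fun _ : ℝ => c) (Ioi a) μ := fun c =>
      integrableOn_const hfina.ne
    set C := ∫ y in Ioi a, h y with hC
    set I1 := ∫ x in Ioi a, (1:ℝ) ∂μ with hI1
    set Ix := ∫ x in Ioi a, x ∂μ with hIx
    set Ag := ∫ x in Ioi a, g x ∂μ with hAg
    set Aa := ∫ x in Ioi a, |g x| ∂μ with hAa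
    have hI1nn : 0 ≤ I1 := setIntegral_nonneg measurableSet_Ioi fun _ _ => zero_le_one
    have hIxnn : 0 ≤ Ix := setIntegral_nonneg measurableSet_Ioi
      fun x hx => le_trans ha (le_of_lt hx)
    have hAann : 0 ≤ Aa := setIntegral_nonneg measurableSet_Ioi fun x _ => abs_nonneg _
    have hCnn' : 0 ≤ C := hCnn a
    -- a * I1 ≤ Ix
    have haI1 : a * I1 ≤ Ix := by
      have h1 : ∫ _ in Ioi a, a ∂μ ≤ Ix :=
        setIntegral_mono_on (hconst_a a) hid_a measurableSet_Ioi
          (fun x hx => le_of_lt hx)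
      have h2 : ∫ _ in Ioi a, a ∂μ = a * I1 := by
        rw [hI1, setIntegral_const, setIntegral_const]
        simp [mul_comm]
      linarith
    have hAgAa : Ag ≤ Aa :=
      setIntegral_mono_on hg_a hgabs_a measurableSet_Ioi fun x _ => le_abs_self _
    have hBval : B a = Aa + |g 0| * I1 + |g' 0| * Ix + |g' 0| * C := rfl
    constructor
    · -- lower bound
      have hg'lb : -|g' 0| ≤ g' a :=
        le_trans (neg_abs_le _) (hmono (mem_Ici.2 le_rfl) (mem_Ici.2 ha) ha)
      have := mul_le_mul_of_nonneg_right hg'lb hCnn'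
      have hpos1 : 0 ≤ |g 0| * I1 := mul_nonneg (abs_nonneg _) hI1nn
      have hpos2 : 0 ≤ |g' 0| * Ix := mul_nonneg (abs_nonneg _) hIxnn
      rw [hBval]
      nlinarith
    · -- upper bound
      rcases le_or_gt (g' a) 0 with hga | hga
      · have hle0 : g' a * C ≤ 0 := mul_nonpos_of_nonpos_of_nonneg hga hCnn'
        have hpos1 : 0 ≤ |g 0| * I1 := mul_nonneg (abs_nonneg _) hI1nn
        have hpos2 : 0 ≤ |g' 0| * Ix := mul_nonneg (abs_nonneg _) hIxnn
        have hpos3 : 0 ≤ |g' 0| * C := mul_nonneg (abs_nonneg _) hCnn'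
        rw [hBval]; linarith
      · have hsub_int : IntegrableOn (fun x => x - a) (Ioi a) μ := hid_a.sub (hconst_a a)
        have hgsub_int : IntegrableOn (fun x => g x - g a) (Ioi a) μ :=
          hg_a.sub (hconst_a (g a))
        have step1 : g' a * C = ∫ x in Ioi a, g' a * (x - a) ∂μ := by
          rw [hC, hCid a ha, ← integral_const_mul]
        have step2 : ∫ x in Ioi a, g' a * (x - a) ∂μ ≤ ∫ x in Ioi a, (g x - g a) ∂μ :=
          setIntegral_mono_on (hsub_int.const_mul _) hgsub_int measurableSet_Ioi
            (fun x hx => hkey a ha x hx)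
        have step3 : ∫ x in Ioi a, (g x - g a) ∂μ = Ag - g a * I1 := by
          rw [integral_sub hg_a (hconst_a (g a)), hAg, hI1, setIntegral_const,
            setIntegral_const]
          simp [mul_comm]
        have hga' := hga_lb a ha
        have m1 : (g 0 + g' 0 * a) * I1 ≤ g a * I1 := mul_le_mul_of_nonneg_right hga' hI1nn
        have m2 : -|g 0| * I1 ≤ g 0 * I1 := mul_le_mul_of_nonneg_right (neg_abs_le _) hI1nn
        have haI1nn : 0 ≤ a * I1 := mul_nonneg ha hI1nn
        have m3 : -|g' 0| * (a * I1) ≤ g' 0 * (a * I1) :=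
          mul_le_mul_of_nonneg_right (neg_abs_le _) haI1nn
        have m4 : |g' 0| * (a * I1) ≤ |g' 0| * Ix :=
          mul_le_mul_of_nonneg_left haI1 (abs_nonneg _)
        have hpos3 : 0 ≤ |g' 0| * C := mul_nonneg (abs_nonneg _) hCnn'
        rw [hBval]
        nlinarith [step1, step2, step3]
  refine tendsto_of_tendsto_of_tendsto_of_le_of_le' (g := fun a => -B a) (h := B)
    (by simpa using hBtend.neg) hBtend ?_ ?_
  · filter_upwards [eventually_ge_atTop (0:ℝ)] with a ha
    rw [hCeq a ha]
    exact (hmain a ha).1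
  · filter_upwards [eventually_ge_atTop (0:ℝ)] with a ha
    rw [hCeq a ha]
    exact (hmain a ha).2
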